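/- arXiv:1906.07602 — 10 statements merged into one kernel-verified Lean document; each statement's English description precedes it below -/
import Mathlib

section
/- There exists a 2-agent chore allocation instance for which no allocation gives both agents value strictly greater than (4/3)·WMMS_i. Concretely: agents with shares s_1 = 3/4, s_2 = 1/4, two chores with V_1 = (-3/4, -1/4) and V_2 = (-1/2, -1/2), satisfy WMMS_1 = -3/4, WMMS_2 = -1/3, and every allocation of the two chores gives some agent i value at most (4/3)·WMMS_i. -/
open Finset

/-- Total value of bundle `k` in the partition `X` of the chores, under valuation `V`. -/
noncomputable def bundleVal {n m : ℕ} (V : Fin m → ℝ) (X : Fin m → Fin n) (k : Fin n) : ℝ :=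
  ∑ j ∈ Finset.univ.filter (fun j => X j = k), V j

/-- The weighted maxmin share of agent `i` with valuation `V` and shares `s`:
`s i` times the maximum over all `n`-partitions of the minimum weighted bundle ratio. -/
noncomputable def WMMS {n m : ℕ} (hn : 0 < n) (s : Fin n → ℝ) (V : Fin m → ℝ) (i : Fin n) : ℝ :=
  haveI : NeZero n := ⟨hn.ne'⟩
  s i * (Finset.univ : Finset (Fin m → Fin n)).sup' Finset.univ_nonempty
    (fun X => (Finset.univ : Finset (Fin n)).inf' Finset.univ_nonempty
      (fun k => bundleVal V X k / s k))

lemma bundleVal2 (V : Fin 2 → ℝ) (X : Fin 2 → Fin 2) (k : Fin 2) :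
    bundleVal V X k = (if X 0 = k then V 0 else 0) + (if X 1 = k then V 1 else 0) := by
  simp [bundleVal, Finset.sum_filter, Fin.sum_univ_two]

lemma inf2 (f : Fin 2 → ℝ) :
    (Finset.univ : Finset (Fin 2)).inf' Finset.univ_nonempty f = min (f 0) (f 1) := by
  apply le_antisymm
  · exact le_min (Finset.inf'_le _ (mem_univ 0)) (Finset.inf'_le _ (mem_univ 1))
  · refine Finset.le_inf' _ _ fun b _ => ?_
    fin_cases b
    · exact min_le_left _ _
    · exact min_le_right _ _

lemma fin2cases (i : Fin 2) : i = 0 ∨ i = 1 := by omega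

/-- Lower bound instance: no allocation of the two chores gives both agents value strictly
greater than `(4/3)·WMMS_i`. -/
theorem stmt_3 :
    let s : Fin 2 → ℝ := ![3/4, 1/4]
    let V : Fin 2 → Fin 2 → ℝ := ![![-3/4, -1/4], ![-1/2, -1/2]]
    WMMS (by norm_num) s (V 0) 0 = -3/4 ∧
    WMMS (by norm_num) s (V 1) 1 = -1/3 ∧
    ∀ X : Fin 2 → Fin 2, ∃ i : Fin 2,
      bundleVal (V i) X i ≤ (4/3) * WMMS (by norm_num) s (V i) i := by
  intro s V
  have hA : ((Finset.univ : Finset (Fin 2 → Fin 2)).sup' Finset.univ_nonempty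
      (fun X => (Finset.univ : Finset (Fin 2)).inf' Finset.univ_nonempty
        (fun k => bundleVal (V 0) X k / s k))) = -1 := by
    apply le_antisymm
    · refine Finset.sup'_le _ _ fun X _ => ?_
      rw [inf2]
      rcases fin2cases (X 0) with h0 | h0 <;> rcases fin2cases (X 1) with h1 | h1 <;>
        · simp only [bundleVal2, h0, h1, V, s, min_le_iff, Matrix.cons_val_zero,
            Matrix.cons_val_one, Matrix.head_cons]
          norm_num
    · refine le_trans ?_ (Finset.le_sup' _ (mem_univ ![0, 1]))
      rw [inf2]
      simp only [bundleVal2, V, s, le_min_iff, Matrix.cons_val_zero,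
        Matrix.cons_val_one, Matrix.head_cons]
      norm_num
  have hB : ((Finset.univ : Finset (Fin 2 → Fin 2)).sup' Finset.univ_nonempty
      (fun X => (Finset.univ : Finset (Fin 2)).inf' Finset.univ_nonempty
        (fun k => bundleVal (V 1) X k / s k))) = -4/3 := by
    apply le_antisymm
    · refine Finset.sup'_le _ _ fun X _ => ?_
      rw [inf2]
      rcases fin2cases (X 0) with h0 | h0 <;> rcases fin2cases (X 1) with h1 | h1 <;>
        · simp only [bundleVal2, h0, h1, V, s, min_le_iff, Matrix.cons_val_zero,
            Matrix.cons_val_one, Matrix.head_cons]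
          norm_num
    · refine le_trans ?_ (Finset.le_sup' _ (mem_univ ![0, 0]))
      rw [inf2]
      simp only [bundleVal2, V, s, le_min_iff, Matrix.cons_val_zero,
        Matrix.cons_val_one, Matrix.head_cons]
      norm_num
  have h1 : WMMS (by norm_num) s (V 0) 0 = -3/4 := by
    rw [WMMS, hA]; simp only [s, Matrix.cons_val_zero]; norm_num
  have h2 : WMMS (by norm_num) s (V 1) 1 = -1/3 := by
    rw [WMMS, hB]; simp only [s, Matrix.cons_val_one, Matrix.head_cons]; norm_num
  refine ⟨h1, h2, fun X => ?_⟩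
  rcases fin2cases (X 0) with h0 | h0 <;> rcases fin2cases (X 1) with h1' | h1'
  · exact ⟨0, by rw [h1]; simp only [bundleVal2, h0, h1', V, Matrix.cons_val_zero,
      Matrix.cons_val_one, Matrix.head_cons]; norm_num⟩
  · exact ⟨1, by rw [h2]; simp only [bundleVal2, h0, h1', V, Matrix.cons_val_zero,
      Matrix.cons_val_one, Matrix.head_cons]; norm_num⟩
  · exact ⟨1, by rw [h2]; simp only [bundleVal2, h0, h1', V, Matrix.cons_val_zero,
      Matrix.cons_val_one, Matrix.head_cons]; norm_num⟩
  · exact ⟨1, by rw [h2]; simp only [bundleVal2, h0, h1', V, Matrix.cons_val_zero,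
      Matrix.cons_val_one, Matrix.head_cons]; norm_num⟩
end

section
/- Rounding lemma: Given agents N, chores M, valuations V_{ij} ≤ 0, thresholds t_i ≤ 0 and targets w_i ≤ 0, define M_i = {j : V_{ij} ≥ t_i}. If the fractional polytope {x ≥ 0 : Σ_{j∈M_i} V_{ij} x_{ij} ≥ w_i for all i, Σ_{i : j∈M_i} x_{ij} = 1 for all j} is nonempty, then there exists an integral assignment x̄ ∈ {0,1} with each chore assigned to exactly one agent i with j ∈ M_i, satisfying Σ_{j∈M_i} V_{ij} x̄_{ij} ≥ w_i + t_i for every agent i. -/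
open Finset

lemma rounding_shrink {n m : ℕ} (V : Fin n → Fin m → ℝ) (t w : Fin n → ℝ)
    (x : Fin n → Fin m → ℝ)
    (hx0 : ∀ i j, 0 ≤ x i j) (hxe : ∀ i j, V i j < t i → x i j = 0)
    (hxc : ∀ j, ∑ i, x i j = 1) (hxv : ∀ i, ∑ j, V i j * x i j ≥ w i)
    (S : Finset (Fin m))
    (hbig : S.card + (S.biUnion (fun j => Finset.univ.filter (fun i => 0 < x i j))).card
        < (S.biUnion (fun j => (Finset.univ.filter (fun i => 0 < x i j)).image
            (fun i => (i, j)))).card) :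
    ∃ y : Fin n → Fin m → ℝ,
      (∀ i j, 0 ≤ y i j) ∧ (∀ i j, V i j < t i → y i j = 0) ∧
      (∀ j, ∑ i, y i j = 1) ∧ (∀ i, ∑ j, V i j * y i j ≥ w i) ∧
      (Finset.univ.filter (fun e : Fin n × Fin m => y e.1 e.2 ≠ 0)) ⊂
        (Finset.univ.filter (fun e : Fin n × Fin m => x e.1 e.2 ≠ 0)) := by
  classical
  set E : Finset (Fin n × Fin m) :=
    S.biUnion (fun j => (Finset.univ.filter (fun i => 0 < x i j)).image (fun i => (i, j)))
    with hE
  set NS : Finset (Fin n) := S.biUnion (fun j => Finset.univ.filter (fun i => 0 < x i j))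
    with hNS
  have hmemE : ∀ e : Fin n × Fin m, e ∈ E ↔ e.2 ∈ S ∧ 0 < x e.1 e.2 := by
    rintro ⟨i, j⟩
    simp only [hE, Finset.mem_biUnion, Finset.mem_image, Finset.mem_filter, Finset.mem_univ,
      true_and, Prod.mk.injEq]
    constructor
    · rintro ⟨j', hj', i', hx', rfl, rfl⟩; exact ⟨hj', hx'⟩
    · rintro ⟨hj, hx'⟩; exact ⟨j, hj, i, hx', rfl, rfl⟩
  have hmemNS : ∀ (i : Fin n) (j : Fin m), (i, j) ∈ E → i ∈ NS := by
    intro i j he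
    rw [hmemE] at he
    exact Finset.mem_biUnion.mpr ⟨j, he.1, Finset.mem_filter.mpr ⟨Finset.mem_univ _, he.2⟩⟩
  -- the linear map whose kernel gives a feasible direction
  let rowMap : ↥S → ((↥E → ℝ) →ₗ[ℝ] ℝ) := fun j =>
    ∑ e ∈ Finset.univ.filter (fun e : ↥E => (e : Fin n × Fin m).2 = (j : Fin m)),
      LinearMap.proj e
  let colMap : ↥NS → ((↥E → ℝ) →ₗ[ℝ] ℝ) := fun i =>
    ∑ e ∈ Finset.univ.filter (fun e : ↥E => (e : Fin n × Fin m).1 = (i : Fin n)),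
      V (i : Fin n) (e : Fin n × Fin m).2 • LinearMap.proj e
  let φ : (↥E → ℝ) →ₗ[ℝ] (↥S → ℝ) × (↥NS → ℝ) :=
    (LinearMap.pi rowMap).prod (LinearMap.pi colMap)
  have hninj : ¬ Function.Injective φ := by
    intro hinj
    have h := LinearMap.finrank_le_finrank_of_injective hinj
    rw [Module.finrank_pi ℝ] at h
    rw [Module.finrank_prod, Module.finrank_pi ℝ, Module.finrank_pi ℝ] at h
    simp only [Fintype.card_coe] at h
    omega
  obtain ⟨a, b, hab, hne⟩ := Function.not_injective_iff.mp hninj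
  set d : ↥E → ℝ := a - b with hd
  have hdne : d ≠ 0 := sub_ne_zero.mpr hne
  have hφd : φ d = 0 := by rw [hd, map_sub, hab, sub_self]
  set d' : Fin n → Fin m → ℝ := fun i j => if h : (i, j) ∈ E then d ⟨(i, j), h⟩ else 0 with hd'
  have hd'E : ∀ i j, d' i j ≠ 0 → (i, j) ∈ E := by
    intro i j h
    by_contra hc
    exact h (by simp [hd', hc])
  -- row sums vanish
  have hrow : ∀ j, ∑ i, d' i j = 0 := by
    intro j
    by_cases hj : j ∈ S
    · have h1 : rowMap ⟨j, hj⟩ d = 0 := by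
        have : (φ d).1 ⟨j, hj⟩ = 0 := by rw [hφd]; rfl
        simpa [φ, LinearMap.pi_apply] using this
      have h2 : rowMap ⟨j, hj⟩ d
          = ∑ e ∈ Finset.univ.filter (fun e : ↥E => (e : Fin n × Fin m).2 = j), d e := by
        simp [rowMap, LinearMap.sum_apply]
      have h3 : ∑ i, d' i j
          = ∑ e ∈ Finset.univ.filter (fun e : ↥E => (e : Fin n × Fin m).2 = j), d e := by
        rw [← Finset.sum_filter_of_ne (p := fun i => (i, j) ∈ E)
          (fun i _ h => hd'E i j h)]
        refine Finset.sum_bij (fun i hi => (⟨(i, j), (Finset.mem_filter.mp hi).2⟩ : ↥E))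
          ?_ ?_ ?_ ?_
        · intro i hi; simp
        · intro i1 h1 i2 h2 hh
          have := congrArg (fun e : ↥E => (e : Fin n × Fin m).1) hh
          simpa using this
        · rintro ⟨⟨i', j'⟩, he⟩ ht
          simp only [Finset.mem_filter, Finset.mem_univ, true_and] at ht
          subst ht
          exact ⟨i', Finset.mem_filter.mpr ⟨Finset.mem_univ _, he⟩, rfl⟩
        · intro i hi
          simp [hd', (Finset.mem_filter.mp hi).2]
      rw [h3, ← h2, h1]
    · refine Finset.sum_eq_zero fun i _ => ?_
      by_contra h
      exact hj ((hmemE (i, j)).mp (hd'E i j h)).1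
  -- weighted column sums vanish
  have hcol : ∀ i, ∑ j, V i j * d' i j = 0 := by
    intro i
    by_cases hi : i ∈ NS
    · have h1 : colMap ⟨i, hi⟩ d = 0 := by
        have : (φ d).2 ⟨i, hi⟩ = 0 := by rw [hφd]; rfl
        simpa [φ, LinearMap.pi_apply] using this
      have h2 : colMap ⟨i, hi⟩ d
          = ∑ e ∈ Finset.univ.filter (fun e : ↥E => (e : Fin n × Fin m).1 = i),
              V i (e : Fin n × Fin m).2 * d e := by
        simp [colMap, LinearMap.sum_apply]
      have h3 : ∑ j, V i j * d' i j
          = ∑ e ∈ Finset.univ.filter (fun e : ↥E => (e : Fin n × Fin m).1 = i),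
              V i (e : Fin n × Fin m).2 * d e := by
        rw [← Finset.sum_filter_of_ne (p := fun j => (i, j) ∈ E)
          (fun j _ h => hd'E i j (fun hz => h (by rw [hz, mul_zero])))]
        refine Finset.sum_bij (fun j hj => (⟨(i, j), (Finset.mem_filter.mp hj).2⟩ : ↥E))
          ?_ ?_ ?_ ?_
        · intro j hj; simp
        · intro j1 h1 j2 h2 hh
          have := congrArg (fun e : ↥E => (e : Fin n × Fin m).2) hh
          simpa using this
        · rintro ⟨⟨i', j'⟩, he⟩ ht
          simp only [Finset.mem_filter, Finset.mem_univ, true_and] at ht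
          subst ht
          exact ⟨j', Finset.mem_filter.mpr ⟨Finset.mem_univ _, he⟩, rfl⟩
        · intro j hj
          simp [hd', (Finset.mem_filter.mp hj).2]
      rw [h3, ← h2, h1]
    · refine Finset.sum_eq_zero fun j _ => ?_
      have : d' i j = 0 := by
        by_contra h
        exact hi (hmemNS i j (hd'E i j h))
      rw [this, mul_zero]
  -- d' has a negative entry
  have hneg : ∃ e : Fin n × Fin m, d' e.1 e.2 < 0 := by
    have : ∃ e : ↥E, d e ≠ 0 := by
      by_contra h
      push_neg at h
      exact hdne (funext fun e => h e)
    obtain ⟨⟨⟨i0, j0⟩, he⟩, hde⟩ := this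
    have hne0 : d' i0 j0 ≠ 0 := by simpa [hd', he] using hde
    rcases lt_or_gt_of_ne hne0 with h | h
    · exact ⟨(i0, j0), h⟩
    · by_contra hc
      push_neg at hc
      have hall : ∀ i ∈ (Finset.univ : Finset (Fin n)), 0 ≤ d' i j0 := by
        intro i _
        rcases lt_or_ge (d' i j0) 0 with hlt | hle
        · exact absurd hlt (not_lt.mpr (hc (i, j0)))
        · exact hle
      have := Finset.single_le_sum hall (Finset.mem_univ i0)
      rw [hrow j0] at this
      linarith
  set T : Finset (Fin n × Fin m) :=
    Finset.univ.filter (fun e : Fin n × Fin m => d' e.1 e.2 < 0) with hT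
  have hTne : T.Nonempty := by
    obtain ⟨e, he⟩ := hneg
    exact ⟨e, Finset.mem_filter.mpr ⟨Finset.mem_univ _, he⟩⟩
  set ε : ℝ := T.inf' hTne (fun e => x e.1 e.2 / (-(d' e.1 e.2))) with hε
  have hεpos : 0 < ε := by
    rw [hε, Finset.lt_inf'_iff]
    intro e he
    have hd'lt : d' e.1 e.2 < 0 := (Finset.mem_filter.mp he).2
    have hxpos : 0 < x e.1 e.2 := ((hmemE e).mp (hd'E e.1 e.2 hd'lt.ne)).2
    exact div_pos hxpos (by linarith)
  have hεle : ∀ i j, d' i j < 0 → ε * (-(d' i j)) ≤ x i j := by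
    intro i j h
    have hmem : (i, j) ∈ T := Finset.mem_filter.mpr ⟨Finset.mem_univ _, h⟩
    have := Finset.inf'_le (fun e : Fin n × Fin m => x e.1 e.2 / (-(d' e.1 e.2))) hmem
    rw [← hε] at this
    have hpos : (0:ℝ) < -(d' i j) := by linarith
    calc ε * (-(d' i j)) ≤ (x i j / (-(d' i j))) * (-(d' i j)) := by
          exact mul_le_mul_of_nonneg_right this hpos.le
      _ = x i j := div_mul_cancel₀ _ hpos.ne'
  refine ⟨fun i j => x i j + ε * d' i j, ?_, ?_, ?_, ?_, ?_⟩
  · intro i j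
    show 0 ≤ x i j + ε * d' i j
    rcases lt_or_ge (d' i j) 0 with h | h
    · have h1 := hεle i j h
      have h2 : ε * d' i j = -(ε * (-(d' i j))) := by ring
      linarith
    · have := mul_nonneg hεpos.le h
      linarith [hx0 i j]
  · intro i j hv
    show x i j + ε * d' i j = 0
    have hx := hxe i j hv
    have : d' i j = 0 := by
      by_contra h
      have := ((hmemE (i, j)).mp (hd'E i j h)).2
      linarith
    rw [hx, this, mul_zero, add_zero]
  · intro j
    show ∑ i, (x i j + ε * d' i j) = 1
    rw [Finset.sum_add_distrib, hxc j, ← Finset.mul_sum, hrow j, mul_zero, add_zero]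
  · intro i
    show ∑ j, V i j * (x i j + ε * d' i j) ≥ w i
    have : ∑ j, V i j * (x i j + ε * d' i j)
        = ∑ j, V i j * x i j + ε * ∑ j, V i j * d' i j := by
      rw [Finset.mul_sum, ← Finset.sum_add_distrib]
      exact Finset.sum_congr rfl fun j _ => by ring
    rw [this, hcol i, mul_zero, add_zero]
    exact hxv i
  · -- strict support decrease
    have hsub : ∀ e : Fin n × Fin m, x e.1 e.2 + ε * d' e.1 e.2 ≠ 0 → x e.1 e.2 ≠ 0 := by
      intro e h hx
      apply h
      have : d' e.1 e.2 = 0 := by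
        by_contra hdd
        have := ((hmemE e).mp (hd'E e.1 e.2 hdd)).2
        linarith
      rw [hx, this, mul_zero, add_zero]
    obtain ⟨e0, he0T, he0⟩ := Finset.exists_mem_eq_inf' hTne
      (fun e : Fin n × Fin m => x e.1 e.2 / (-(d' e.1 e.2)))
    have hd0 : d' e0.1 e0.2 < 0 := (Finset.mem_filter.mp he0T).2
    have hx0pos : 0 < x e0.1 e0.2 := ((hmemE e0).mp (hd'E e0.1 e0.2 hd0.ne)).2
    have hzero : x e0.1 e0.2 + ε * d' e0.1 e0.2 = 0 := by
      have heq : ε = x e0.1 e0.2 / -(d' e0.1 e0.2) := by rw [hε, he0]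
      rw [heq]
      field_simp
      rw [div_self hd0.ne]
      ring
    constructor
    · intro e he
      simp only [Finset.mem_filter, Finset.mem_univ, true_and] at he ⊢
      exact hsub e he
    · intro hcon
      have h1 : e0 ∈ Finset.univ.filter (fun e : Fin n × Fin m => x e.1 e.2 ≠ 0) :=
        Finset.mem_filter.mpr ⟨Finset.mem_univ _, hx0pos.ne'⟩
      have h2 := hcon h1
      simp only [Finset.mem_filter, Finset.mem_univ, true_and] at h2
      exact h2 hzero

/-- Rounding lemma: if the restricted fractional program (variables only on eligible pairs
`V i j ≥ t i`) is feasible with targets `w i`, then there is an integral assignment of every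
chore to an eligible agent giving each agent `i` total value at least `w i + t i`. -/
theorem stmt_5 {n m : ℕ} (hn : 0 < n) (V : Fin n → Fin m → ℝ)
    (t w : Fin n → ℝ) (hV : ∀ i j, V i j ≤ 0) (ht : ∀ i, t i ≤ 0) (hw : ∀ i, w i ≤ 0)
    (hfeas : ∃ x : Fin n → Fin m → ℝ,
      (∀ i j, 0 ≤ x i j) ∧
      (∀ i j, V i j < t i → x i j = 0) ∧
      (∀ j, ∑ i, x i j = 1) ∧
      (∀ i, ∑ j, V i j * x i j ≥ w i)) :
    ∃ X : Fin m → Fin n,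
      (∀ j, V (X j) j ≥ t (X j)) ∧
      (∀ i, bundleVal (V i) X i ≥ w i + t i) := by
  classical
  -- pick a feasible solution with minimal support
  have hex : ∃ k : ℕ, ∃ x : Fin n → Fin m → ℝ,
      ((∀ i j, 0 ≤ x i j) ∧ (∀ i j, V i j < t i → x i j = 0) ∧
       (∀ j, ∑ i, x i j = 1) ∧ (∀ i, ∑ j, V i j * x i j ≥ w i)) ∧
      (Finset.univ.filter (fun e : Fin n × Fin m => x e.1 e.2 ≠ 0)).card = k := by
    obtain ⟨x, hx⟩ := hfeas
    exact ⟨_, x, hx, rfl⟩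
  obtain ⟨x, ⟨hx0, hxe, hxc, hxv⟩, hxcard⟩ := Nat.find_spec hex
  -- key structural bound, from minimality of the support and `rounding_shrink`
  have key : ∀ S : Finset (Fin m),
      (S.biUnion (fun j => (Finset.univ.filter (fun i => 0 < x i j)).image
          (fun i => (i, j)))).card
        ≤ S.card + (S.biUnion (fun j => Finset.univ.filter (fun i => 0 < x i j))).card := by
    intro S
    by_contra hb
    push_neg at hb
    obtain ⟨y, hy0, hye, hyc, hyv, hss⟩ := rounding_shrink V t w x hx0 hxe hxc hxv S hb
    have h1 : Nat.find hex
        ≤ (Finset.univ.filter (fun e : Fin n × Fin m => y e.1 e.2 ≠ 0)).card :=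
      Nat.find_min' hex ⟨y, ⟨hy0, hye, hyc, hyv⟩, rfl⟩
    have h2 := Finset.card_lt_card hss
    omega
  -- fractional chores and their neighborhoods
  set F : Finset (Fin m) := Finset.univ.filter (fun j => ¬ ∃ i, x i j = 1) with hF
  set deg : Fin m → Finset (Fin n) := fun j => Finset.univ.filter (fun i => 0 < x i j)
    with hdeg
  have hdeg2 : ∀ j ∈ F, 2 ≤ (deg j).card := by
    intro j hj
    have hjf : ¬ ∃ i, x i j = 1 := (Finset.mem_filter.mp hj).2
    have hpos : ∃ i, 0 < x i j := by
      by_contra h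
      push_neg at h
      have : ∑ i, x i j ≤ 0 := Finset.sum_nonpos (fun i _ => h i)
      rw [hxc j] at this
      linarith
    obtain ⟨i1, hi1⟩ := hpos
    have hi2 : ∃ i2, i2 ≠ i1 ∧ 0 < x i2 j := by
      by_contra h
      push_neg at h
      apply hjf
      refine ⟨i1, ?_⟩
      have hs := hxc j
      rw [Finset.sum_eq_single i1 (fun i _ hne => le_antisymm
        (le_of_not_gt (fun hlt => ((h i hne).not_gt hlt))) (hx0 i j))
        (fun hni => absurd (Finset.mem_univ i1) hni)] at hs
      exact hs
    obtain ⟨i2, hne12, hi2⟩ := hi2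
    have : 1 < (deg j).card := Finset.one_lt_card.mpr
      ⟨i1, Finset.mem_filter.mpr ⟨Finset.mem_univ _, hi1⟩,
       i2, Finset.mem_filter.mpr ⟨Finset.mem_univ _, hi2⟩, hne12.symm⟩
    omega
  -- Hall's condition on fractional chores
  have hal : ∀ A : Finset ↥F, A.card ≤ (A.biUnion (fun j => deg (j : Fin m))).card := by
    intro A
    set S : Finset (Fin m) := A.map ⟨Subtype.val, Subtype.val_injective⟩ with hS
    have hSF : ∀ j ∈ S, j ∈ F := by
      intro j hj
      obtain ⟨a, _, rfl⟩ := Finset.mem_map.mp hj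
      exact a.2
    have hcardE : (S.biUnion (fun j => (deg j).image (fun i => (i, j)))).card
        = ∑ j ∈ S, (deg j).card := by
      rw [Finset.card_biUnion]
      · exact Finset.sum_congr rfl fun j _ =>
          Finset.card_image_of_injective _ (fun a b h => (Prod.ext_iff.mp h).1)
      · intro j1 _ j2 _ hne
        rw [Function.onFun, Finset.disjoint_left]
        intro e he1 he2
        obtain ⟨_, _, rfl⟩ := Finset.mem_image.mp he1
        obtain ⟨i2, _, h2⟩ := Finset.mem_image.mp he2
        have h3 : j2 = j1 := congrArg Prod.snd h2
        exact hne h3.symm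
    have hsum2 : S.card * 2 ≤ ∑ j ∈ S, (deg j).card := by
      have := Finset.card_nsmul_le_sum S (fun j => (deg j).card) 2
        (fun j hj => hdeg2 j (hSF j hj))
      simpa [smul_eq_mul] using this
    have hkey := key S
    have hNS : A.biUnion (fun j => deg (j : Fin m)) = S.biUnion deg := by
      ext i
      simp only [Finset.mem_biUnion, Finset.mem_map, hS, Function.Embedding.coeFn_mk]
      constructor
      · rintro ⟨a, ha, hi⟩; exact ⟨a.1, ⟨a, ha, rfl⟩, hi⟩
      · rintro ⟨j, ⟨a, ha, rfl⟩, hi⟩; exact ⟨a, ha, hi⟩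
    have hAS : A.card = S.card := (Finset.card_map _).symm
    simp only [hdeg] at hcardE hsum2 hNS hkey ⊢
    rw [hcardE] at hkey
    rw [hNS]
    omega
  obtain ⟨f, hfinj, hfr⟩ :=
    (Finset.all_card_le_biUnion_card_iff_exists_injective (fun j : ↥F => deg (j : Fin m))).mp hal
  -- the integral assignment
  set X : Fin m → Fin n := fun j =>
    if h : ∃ i, x i j = 1 then h.choose
    else f ⟨j, Finset.mem_filter.mpr ⟨Finset.mem_univ _, h⟩⟩ with hX
  have hXpos : ∀ j, 0 < x (X j) j := by
    intro j
    by_cases h : ∃ i, x i j = 1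
    · rw [hX]; simp only [dif_pos h]; rw [h.choose_spec]; exact one_pos
    · rw [hX]; simp only [dif_neg h]
      have := hfr ⟨j, Finset.mem_filter.mpr ⟨Finset.mem_univ _, h⟩⟩
      exact (Finset.mem_filter.mp this).2
  have helig : ∀ j, V (X j) j ≥ t (X j) := by
    intro j
    by_contra h
    push_neg at h
    have := hxe (X j) j h
    have := hXpos j
    linarith
  refine ⟨X, helig, ?_⟩
  intro i
  show ∑ j ∈ Finset.univ.filter (fun j => X j = i), V i j ≥ w i + t i
  have hsplit := Finset.sum_filter_add_sum_filter_not
    (Finset.univ.filter (fun j => X j = i)) (fun j => ∃ i', x i' j = 1) (fun j => V i j)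
  set Aint := (Finset.univ.filter (fun j => X j = i)).filter (fun j => ∃ i', x i' j = 1)
    with hAint
  set Afrac := (Finset.univ.filter (fun j => X j = i)).filter (fun j => ¬ ∃ i', x i' j = 1)
    with hAfrac
  -- On Aint, x i j = 1
  have hint1 : ∀ j ∈ Aint, x i j = 1 := by
    intro j hj
    obtain ⟨hj1, hj2⟩ := Finset.mem_filter.mp hj
    have hXj : X j = i := (Finset.mem_filter.mp hj1).2
    rw [hX] at hXj
    simp only [dif_pos hj2] at hXj
    rw [← hXj]
    exact hj2.choose_spec
  -- integral part dominates the fractional value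
  have hIntPart : ∑ j ∈ Aint, V i j ≥ ∑ j, V i j * x i j := by
    have hsub : Aint ⊆ Finset.univ := Finset.subset_univ _
    have hmono : ∑ j, V i j * x i j ≤ ∑ j ∈ Aint, V i j * x i j := by
      have := Finset.sum_le_sum_of_subset_of_nonneg (f := fun j => -(V i j * x i j)) hsub
        (fun j _ _ => by
          show (0:ℝ) ≤ -(V i j * x i j)
          have := mul_nonneg (neg_nonneg.mpr (hV i j)) (hx0 i j)
          nlinarith)
      have h1 : ∑ j ∈ Aint, -(V i j * x i j) ≤ ∑ j : Fin m, -(V i j * x i j) := this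
      rw [Finset.sum_neg_distrib, Finset.sum_neg_distrib] at h1
      linarith
    have heq : ∑ j ∈ Aint, V i j * x i j = ∑ j ∈ Aint, V i j :=
      Finset.sum_congr rfl fun j hj => by rw [hint1 j hj, mul_one]
    linarith
  -- fractional part: at most one chore, of value ≥ t i
  have hfrac : ∑ j ∈ Afrac, V i j ≥ t i := by
    have hcard1 : Afrac.card ≤ 1 := by
      rw [Finset.card_le_one]
      intro j1 hj1 j2 hj2
      obtain ⟨hm1, hnint1⟩ := Finset.mem_filter.mp hj1
      obtain ⟨hm2, hnint2⟩ := Finset.mem_filter.mp hj2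
      have hX1 : X j1 = i := (Finset.mem_filter.mp hm1).2
      have hX2 : X j2 = i := (Finset.mem_filter.mp hm2).2
      rw [hX] at hX1 hX2
      simp only [dif_neg hnint1] at hX1
      simp only [dif_neg hnint2] at hX2
      have := hfinj (hX1.trans hX2.symm)
      exact congrArg Subtype.val this
    rcases Finset.eq_empty_or_nonempty Afrac with h | ⟨j, hj⟩
    · rw [h, Finset.sum_empty]; exact ht i
    · have hsing : Afrac = {j} := by
        apply Finset.eq_singleton_iff_unique_mem.mpr
        exact ⟨hj, fun j' hj' => Finset.card_le_one.mp hcard1 j' hj' j hj⟩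
      rw [hsing, Finset.sum_singleton]
      have hXj : X j = i := (Finset.mem_filter.mp (Finset.mem_filter.mp hj).1).2
      have := helig j
      rw [hXj] at this
      exact this
  have hval := hxv i
  linarith [hsplit, hIntPart, hfrac, hval]
end

section
/- For two agents with shares s_1 ≤ 1/3 ≤ 2/3 ≤ s_2 and normalized additive valuations (V_i(M) = -1), the allocation X_1 = ∅, X_2 = M satisfies V_i(X_i) ≥ (3/2)·WMMS_i for both agents. -/
open Finset

lemma wmms_le {m : ℕ} (s : Fin 2 → ℝ) (V : Fin m → ℝ)
    (hs_pos : ∀ i, 0 < s i) (hs_sum : s 0 + s 1 = 1)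
    (hV_norm : ∑ j, V j = -1) (i : Fin 2) :
    WMMS (by norm_num) s V i ≤ -s i := by
  have key : (Finset.univ : Finset (Fin m → Fin 2)).sup' Finset.univ_nonempty
      (fun X => (Finset.univ : Finset (Fin 2)).inf' Finset.univ_nonempty
        (fun k => bundleVal V X k / s k)) ≤ -1 := by
    apply Finset.sup'_le
    intro X _
    have hsum : ∑ k : Fin 2, bundleVal V X k = -1 := by
      rw [← hV_norm]
      exact Finset.sum_fiberwise_of_maps_to (fun j _ => Finset.mem_univ (X j)) V
    by_contra h
    push_neg at h
    have h2 : ∀ k : Fin 2, -1 < bundleVal V X k / s k := by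
      intro k
      exact lt_of_lt_of_le h (Finset.inf'_le _ (Finset.mem_univ k))
    have h3 : ∀ k : Fin 2, -s k < bundleVal V X k := by
      intro k
      have := (lt_div_iff₀ (hs_pos k)).mp (h2 k)
      linarith
    have := h3 0
    have := h3 1
    rw [Fin.sum_univ_two] at hsum
    linarith
  have hsi := hs_pos i
  calc WMMS (by norm_num) s V i ≤ s i * (-1) := by
        unfold WMMS
        exact mul_le_mul_of_nonneg_left key hsi.le
    _ = -s i := by ring

/-- Two agents with `s 0 ≤ 1/3 ≤ 2/3 ≤ s 1` and normalized valuations: giving everything to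
agent `1` is a `(3/2)`-approximation of WMMS for both agents. -/
theorem stmt_8 {m : ℕ} (s : Fin 2 → ℝ) (V : Fin 2 → Fin m → ℝ)
    (hs_pos : ∀ i, 0 < s i) (hs_sum : s 0 + s 1 = 1)
    (hs0 : s 0 ≤ 1/3) (hs1 : 2/3 ≤ s 1)
    (hV : ∀ i j, V i j ≤ 0) (hV_norm : ∀ i, ∑ j, V i j = -1) :
    ∀ i : Fin 2, bundleVal (V i) (fun _ => 1) i
      ≥ (3/2) * WMMS (by norm_num) s (V i) i := by
  have hb0 : bundleVal (V 0) (fun _ => (1 : Fin 2)) 0 = 0 := by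
    unfold bundleVal
    apply Finset.sum_eq_zero
    intro j hj
    simp at hj
  have hb1 : bundleVal (V 1) (fun _ => (1 : Fin 2)) 1 = -1 := by
    unfold bundleVal
    rw [Finset.filter_true_of_mem (fun j _ => rfl)]
    exact hV_norm 1
  intro i
  have hw := wmms_le s (V i) hs_pos hs_sum (hV_norm i) i
  fin_cases i
  · simp only [Fin.zero_eta, Fin.isValue] at hw ⊢
    rw [hb0]
    have := hs_pos 0
    nlinarith
  · simp only [Fin.mk_one, Fin.isValue] at hw ⊢
    rw [hb1]
    nlinarith
end

section
/- For two agents with shares 1/3 < s_1 ≤ 1/2 ≤ s_2 < 2/3, let ⟨A_1, A_2⟩ be a partition achieving WMMS_2 for agent 2 (with A_1 the bundle compared against s_1), and suppose agent 1 picks her preferred bundle X_1 ∈ {A_1, A_2} and agent 2 takes the other, X_2. Then V_2(X_2) ≥ WMMS_2 and V_1(X_1) ≥ (3/2)·WMMS_1. Hence the resulting allocation is a (3/2)-approximation of WMMS. -/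
open Finset

lemma bundleVal_sum_two {m : ℕ} (V : Fin m → ℝ) (X : Fin m → Fin 2) :
    bundleVal V X 0 + bundleVal V X 1 = ∑ j, V j := by
  rw [← Fin.sum_univ_two (f := fun k => bundleVal V X k)]
  exact Finset.sum_fiberwise _ _ _

lemma bundleVal_swap1 {m : ℕ} (V : Fin m → ℝ) (X : Fin m → Fin 2) :
    bundleVal V ((Equiv.swap (0:Fin 2) 1) ∘ X) 1 = bundleVal V X 0 := by
  unfold bundleVal
  congr 1
  apply Finset.filter_congr
  intro j _
  have : ∀ x : Fin 2, (Equiv.swap (0:Fin 2) 1 x = 1) ↔ x = 0 := by decide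
  simp [Function.comp, this]

lemma bundleVal_swap0 {m : ℕ} (V : Fin m → ℝ) (X : Fin m → Fin 2) :
    bundleVal V ((Equiv.swap (0:Fin 2) 1) ∘ X) 0 = bundleVal V X 1 := by
  unfold bundleVal
  congr 1
  apply Finset.filter_congr
  intro j _
  have : ∀ x : Fin 2, (Equiv.swap (0:Fin 2) 1 x = 0) ↔ x = 1 := by decide
  simp [Function.comp, this]

lemma bundleVal_nonpos {m : ℕ} (V : Fin m → ℝ) (hV : ∀ j, V j ≤ 0) (X : Fin m → Fin 2)
    (k : Fin 2) : bundleVal V X k ≤ 0 :=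
  Finset.sum_nonpos (fun j _ => hV j)

/-- Divide-and-choose for `1/3 < s 0 ≤ 1/2 ≤ s 1 < 2/3`: if agent `1` divides according to a
partition achieving her WMMS and agent `0` picks her preferred bundle, then agent `1` gets at
least `WMMS_1` and agent `0` gets at least `(3/2)·WMMS_0`. -/
theorem stmt_9 {m : ℕ} (s : Fin 2 → ℝ) (V : Fin 2 → Fin m → ℝ)
    (hs0 : 1/3 < s 0) (hs0' : s 0 ≤ 1/2) (hs1 : 1/2 ≤ s 1) (hs1' : s 1 < 2/3)
    (hs_pos : ∀ i, 0 < s i) (hs_sum : s 0 + s 1 = 1)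
    (hV : ∀ i j, V i j ≤ 0) (hV_norm : ∀ i, ∑ j, V i j = -1)
    (X : Fin m → Fin 2)
    (hopt : s 1 * (Finset.univ : Finset (Fin 2)).inf' Finset.univ_nonempty
        (fun k => bundleVal (V 1) X k / s k) = WMMS (by norm_num) s (V 1) 1) :
    let Y : Fin m → Fin 2 :=
      if bundleVal (V 0) X 0 ≥ bundleVal (V 0) X 1 then X else (Equiv.swap (0:Fin 2) 1) ∘ X
    bundleVal (V 1) Y 1 ≥ WMMS (by norm_num) s (V 1) 1 ∧
    bundleVal (V 0) Y 0 ≥ (3/2) * WMMS (by norm_num) s (V 0) 0 := by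
  intro Y
  have h0pos := hs_pos 0
  have h1pos := hs_pos 1
  set t := (Finset.univ : Finset (Fin 2)).inf' Finset.univ_nonempty
      (fun k => bundleVal (V 1) X k / s k) with ht
  set b0 := bundleVal (V 1) X 0 with hb0
  set b1 := bundleVal (V 1) X 1 with hb1
  have ht0 : t ≤ b0 / s 0 := Finset.inf'_le _ (Finset.mem_univ 0)
  have ht1 : t ≤ b1 / s 1 := Finset.inf'_le _ (Finset.mem_univ 1)
  have hb0np : b0 ≤ 0 := bundleVal_nonpos _ (hV 1) X 0
  have hb1np : b1 ≤ 0 := bundleVal_nonpos _ (hV 1) X 1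
  have ht0' : t * s 0 ≤ b0 := (le_div_iff₀ h0pos).mp ht0
  have ht1' : t * s 1 ≤ b1 := (le_div_iff₀ h1pos).mp ht1
  have htnp : t ≤ 0 := by nlinarith
  -- both bundles are at least s 1 * t = WMMS_1
  have hW1b0 : s 1 * t ≤ b0 := by nlinarith
  have hW1b1 : s 1 * t ≤ b1 := by nlinarith
  -- WMMS_0 ≤ -s 0
  have hsup : ((Finset.univ : Finset (Fin m → Fin 2)).sup' Finset.univ_nonempty
      (fun X' => (Finset.univ : Finset (Fin 2)).inf' Finset.univ_nonempty
        (fun k => bundleVal (V 0) X' k / s k))) ≤ -1 := by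
    apply Finset.sup'_le
    intro X' _
    set u := (Finset.univ : Finset (Fin 2)).inf' Finset.univ_nonempty
        (fun k => bundleVal (V 0) X' k / s k) with hu
    have hu0 : u ≤ bundleVal (V 0) X' 0 / s 0 := Finset.inf'_le _ (Finset.mem_univ 0)
    have hu1 : u ≤ bundleVal (V 0) X' 1 / s 1 := Finset.inf'_le _ (Finset.mem_univ 1)
    have hu0' : u * s 0 ≤ bundleVal (V 0) X' 0 := (le_div_iff₀ h0pos).mp hu0
    have hu1' : u * s 1 ≤ bundleVal (V 0) X' 1 := (le_div_iff₀ h1pos).mp hu1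
    have hsum := bundleVal_sum_two (V 0) X'
    rw [hV_norm 0] at hsum
    nlinarith
  have hW0 : WMMS (by norm_num) s (V 0) 0 ≤ -s 0 := by
    unfold WMMS
    calc s 0 * _ ≤ s 0 * (-1) := by
          exact mul_le_mul_of_nonneg_left hsup (le_of_lt h0pos)
      _ = -s 0 := by ring
  have hsum1 : b0 + b1 = -1 := by rw [hb0, hb1, bundleVal_sum_two, hV_norm 1]
  have hsum0 : bundleVal (V 0) X 0 + bundleVal (V 0) X 1 = -1 := by
    rw [bundleVal_sum_two, hV_norm 0]
  constructor
  · show bundleVal (V 1) Y 1 ≥ WMMS (by norm_num) s (V 1) 1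
    rw [← hopt]
    by_cases h : bundleVal (V 0) X 0 ≥ bundleVal (V 0) X 1
    · have : Y = X := if_pos h
      rw [this]
      exact hW1b1
    · have : Y = (Equiv.swap (0:Fin 2) 1) ∘ X := if_neg h
      rw [this, bundleVal_swap1]
      exact hW1b0
  · show bundleVal (V 0) Y 0 ≥ (3/2) * WMMS (by norm_num) s (V 0) 0
    by_cases h : bundleVal (V 0) X 0 ≥ bundleVal (V 0) X 1
    · have hy : Y = X := if_pos h
      rw [hy]
      nlinarith
    · have hy : Y = (Equiv.swap (0:Fin 2) 1) ∘ X := if_neg h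
      rw [hy, bundleVal_swap0]
      push_neg at h
      nlinarith
end

section
/- For identical uniform valuations (every chore has value -1 to every agent), any partition ⟨X_1,...,X_n⟩ produced by the greedy algorithm that assigns chores one at a time to an agent maximizing (−|X_i|−1)/s_i achieves the exact weighted maxmin value: min_k (−|X_k|)/s_k = max over all partitions Y of min_k (−|Y_k|)/s_k. Hence each agent i receives value −|X_i| ≥ WMMS_i = s_i · max_Y min_k (−|Y_k|)/s_k. -/
open Finset

/-- For uniform identical valuations (every chore worth `-1`), any assignment `X` satisfying
the greedy property (each chore `j` goes to an agent maximizing `(-|X_i|-1)/s_i` at the time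
it is processed) achieves the exact weighted maxmin value, and every agent receives at least
her WMMS. -/
theorem stmt_11 {n m : ℕ} (hn : 0 < n) (s : Fin n → ℝ) (hs_pos : ∀ i, 0 < s i)
    (hs_sum : ∑ i, s i = 1) (X : Fin m → Fin n)
    (hgreedy : ∀ j : Fin m, ∀ i : Fin n,
      (-(((Finset.univ.filter (fun j' => j' < j ∧ X j' = X j)).card : ℝ)) - 1) / s (X j) ≥
      (-(((Finset.univ.filter (fun j' => j' < j ∧ X j' = i)).card : ℝ)) - 1) / s i) :
    haveI : NeZero n := ⟨hn.ne'⟩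
    ((Finset.univ : Finset (Fin n)).inf' Finset.univ_nonempty
        (fun k => bundleVal (fun _ : Fin m => (-1:ℝ)) X k / s k) =
      (Finset.univ : Finset (Fin m → Fin n)).sup' Finset.univ_nonempty
        (fun Y => (Finset.univ : Finset (Fin n)).inf' Finset.univ_nonempty
          (fun k => bundleVal (fun _ : Fin m => (-1:ℝ)) Y k / s k))) ∧
    ∀ i, bundleVal (fun _ : Fin m => (-1:ℝ)) X i ≥ WMMS hn s (fun _ : Fin m => (-1:ℝ)) i := by
  haveI : NeZero n := ⟨hn.ne'⟩
  have hbv : ∀ (Z : Fin m → Fin n) (k : Fin n),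
      bundleVal (fun _ : Fin m => (-1:ℝ)) Z k
        = -(((univ.filter (fun j => Z j = k)).card : ℝ)) := by
    intro Z k; simp [bundleVal]
  have hsumfib : ∀ (Z : Fin m → Fin n),
      ∑ k, (univ.filter (fun j => Z j = k)).card = m := by
    intro Z
    have h := Finset.card_eq_sum_card_fiberwise (f := Z) (s := univ) (t := univ)
      (fun x _ => mem_univ _)
    simpa using h.symm
  have key : ∀ Y : Fin m → Fin n,
      (univ : Finset (Fin n)).inf' univ_nonempty
        (fun k => bundleVal (fun _ : Fin m => (-1:ℝ)) Y k / s k)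
      ≤ (univ : Finset (Fin n)).inf' univ_nonempty
        (fun k => bundleVal (fun _ : Fin m => (-1:ℝ)) X k / s k) := by
    intro Y
    rcases Nat.eq_zero_or_pos m with hm | hm
    · subst hm
      apply le_of_eq
      apply Finset.inf'_congr _ rfl
      intro k _
      have h1 : (univ.filter (fun j : Fin 0 => Y j = k)) = ∅ := by
        apply Finset.eq_empty_of_forall_notMem; intro x; exact x.elim0
      have h2 : (univ.filter (fun j : Fin 0 => X j = k)) = ∅ := by
        apply Finset.eq_empty_of_forall_notMem; intro x; exact x.elim0
      rw [hbv, hbv, h1, h2]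
    · obtain ⟨a, -, ha⟩ := Finset.exists_mem_eq_inf' (univ_nonempty)
        (fun k => bundleVal (fun _ : Fin m => (-1:ℝ)) X k / s k)
      set A : ℝ := ((univ.filter (fun j => X j = a)).card : ℝ) with hA
      have hmax : ∀ k : Fin n,
          ((univ.filter (fun j => X j = k)).card : ℝ) / s k ≤ A / s a := by
        intro k
        have h1 := Finset.inf'_le (b := k)
          (fun k => bundleVal (fun _ : Fin m => (-1:ℝ)) X k / s k) (mem_univ k)
        rw [ha, hbv, hbv] at h1
        have hsa := hs_pos a; have hsk := hs_pos k
        rw [neg_div, neg_div, neg_le_neg_iff] at h1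
        exact h1
      -- A ≥ 1
      have hSpos : 0 < (univ.filter (fun j => X j = a)).card := by
        by_contra h
        push_neg at h
        have hall : ∀ k : Fin n, ((univ.filter (fun j => X j = k)).card : ℝ) = 0 := by
          intro k
          have h0 : A = 0 := by
            have := Nat.le_zero.mp h; rw [hA, this]; norm_num
          have hk := hmax k
          rw [h0] at hk
          have hnn : (0:ℝ) ≤ ((univ.filter (fun j => X j = k)).card : ℝ) := by positivity
          have := (div_le_div_iff₀ (hs_pos k) (hs_pos a)).mp hk
          nlinarith [hs_pos a, hs_pos k]
        have : (m : ℝ) = 0 := by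
          rw [← hsumfib X]; push_cast
          rw [Finset.sum_eq_zero (fun k _ => hall k)]
        exact absurd (by exact_mod_cast this) hm.ne'
      have hSne : (univ.filter (fun j => X j = a)).Nonempty := Finset.card_pos.mp hSpos
      set j := (univ.filter (fun j => X j = a)).max' hSne with hjdef
      have hjmem := Finset.max'_mem (univ.filter (fun j => X j = a)) hSne
      have hXj : X j = a := (Finset.mem_filter.mp hjmem).2
      have herase : (univ.filter (fun j' => j' < j ∧ X j' = a))
          = (univ.filter (fun j => X j = a)).erase j := by
        ext j'
        simp only [Finset.mem_filter, Finset.mem_univ, true_and, Finset.mem_erase]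
        constructor
        · rintro ⟨hlt, hXa⟩; exact ⟨ne_of_lt hlt, hXa⟩
        · rintro ⟨hne, hXa⟩
          refine ⟨lt_of_le_of_ne ?_ hne, hXa⟩
          exact Finset.le_max' (univ.filter (fun j => X j = a)) j'
            (Finset.mem_filter.mpr ⟨mem_univ _, hXa⟩)
      have hcard' : (((univ.filter (fun j' => j' < j ∧ X j' = a)).card : ℝ)) = A - 1 := by
        rw [herase, Finset.card_erase_of_mem hjmem, hA]
        have : 1 ≤ (univ.filter (fun j => X j = a)).card := hSpos
        push_cast [Nat.cast_sub this]
        ring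
      -- greedy inequality
      have hG : ∀ i : Fin n,
          A * s i ≤ (((univ.filter (fun j' => j' < j ∧ X j' = i)).card : ℝ) + 1) * s a := by
        intro i
        have h := hgreedy j i
        rw [hXj, hcard'] at h
        rw [ge_iff_le, div_le_div_iff₀ (hs_pos i) (hs_pos a)] at h
        nlinarith [h]
      -- by contradiction
      by_contra hcon
      push_neg at hcon
      have hk : ∀ k : Fin n,
          (univ.filter (fun j => Y j = k)).card
            ≤ (univ.filter (fun j' => j' < j ∧ X j' = k)).card := by
        intro k
        have h1 := Finset.inf'_le (b := k)
          (fun k => bundleVal (fun _ : Fin m => (-1:ℝ)) Y k / s k) (mem_univ k)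
        have h2 : (univ : Finset (Fin n)).inf' univ_nonempty
            (fun k => bundleVal (fun _ : Fin m => (-1:ℝ)) X k / s k)
            < bundleVal (fun _ : Fin m => (-1:ℝ)) Y k / s k := lt_of_lt_of_le hcon h1
        rw [ha, hbv X a, hbv Y k, neg_div, neg_div, neg_lt_neg_iff] at h2
        have h3 : ((univ.filter (fun j => Y j = k)).card : ℝ) * s a < A * s k :=
          (div_lt_div_iff₀ (hs_pos k) (hs_pos a)).mp h2
        have h4 := hG k
        have hsa := hs_pos a
        have h5 : ((univ.filter (fun j => Y j = k)).card : ℝ)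
            < ((univ.filter (fun j' => j' < j ∧ X j' = k)).card : ℝ) + 1 := by
          nlinarith
        exact_mod_cast Nat.lt_succ_iff.mp (by exact_mod_cast h5)
      -- sum up
      have hsum' : ∑ k, (univ.filter (fun j' => j' < j ∧ X j' = k)).card = (j : ℕ) := by
        have h := Finset.card_eq_sum_card_fiberwise (f := X)
          (s := univ.filter (fun j' => j' < j)) (t := univ) (fun x _ => mem_univ _)
        have hIio : (univ.filter (fun j' => j' < j)) = Finset.Iio j := by
          ext x; simp
        have hc : (univ.filter (fun j' : Fin m => j' < j)).card = (j : ℕ) := by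
          rw [hIio, Fin.card_Iio]
        rw [hc] at h
        have h2 : ∑ k : Fin n, (univ.filter (fun j' => j' < j ∧ X j' = k)).card
            = ∑ k : Fin n, ((univ.filter (fun j' : Fin m => j' < j)).filter
                (fun j' => X j' = k)).card := by
          apply Finset.sum_congr rfl
          intro k _
          rw [Finset.filter_filter]
        rw [h2]
        exact h.symm
      have hle : m ≤ (j : ℕ) := by
        calc m = ∑ k, (univ.filter (fun j => Y j = k)).card := (hsumfib Y).symm
        _ ≤ ∑ k, (univ.filter (fun j' => j' < j ∧ X j' = k)).card :=
            Finset.sum_le_sum (fun k _ => hk k)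
        _ = (j : ℕ) := hsum'
      exact absurd hle (not_le.mpr j.isLt)
  have heq : (univ : Finset (Fin n)).inf' univ_nonempty
        (fun k => bundleVal (fun _ : Fin m => (-1:ℝ)) X k / s k)
      = (univ : Finset (Fin m → Fin n)).sup' univ_nonempty
        (fun Y => (univ : Finset (Fin n)).inf' univ_nonempty
          (fun k => bundleVal (fun _ : Fin m => (-1:ℝ)) Y k / s k)) :=
    le_antisymm (Finset.le_sup' (f := fun Y => (univ : Finset (Fin n)).inf' univ_nonempty (fun k => bundleVal (fun _ : Fin m => (-1:ℝ)) Y k / s k)) (mem_univ X)) (Finset.sup'_le _ _ (fun Y _ => key Y))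
  refine ⟨heq, ?_⟩
  intro i
  rw [WMMS, ← heq]
  have h1 : (univ : Finset (Fin n)).inf' univ_nonempty
      (fun k => bundleVal (fun _ : Fin m => (-1:ℝ)) X k / s k)
      ≤ bundleVal (fun _ : Fin m => (-1:ℝ)) X i / s i :=
    Finset.inf'_le _ (mem_univ i)
  have h2 := mul_le_mul_of_nonneg_left h1 (hs_pos i).le
  rw [mul_div_cancel₀ _ (hs_pos i).ne'] at h2
  exact h2
end

section
/- For binary valuations (V_{ij} ∈ {0,−1}), a WMMS allocation always exists: there is a partition ⟨X_1,...,X_n⟩ of M such that V_i(X_i) ≥ WMMS_i for every agent i. -/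
open Finset

/-- For binary valuations (`V i j ∈ {0, -1}`), a WMMS allocation always exists. -/
theorem stmt_12 {n m : ℕ} (hn : 0 < n) (s : Fin n → ℝ) (V : Fin n → Fin m → ℝ)
    (hs_pos : ∀ i, 0 < s i) (hs_sum : ∑ i, s i = 1)
    (hbin : ∀ i j, V i j = 0 ∨ V i j = -1) :
    ∃ X : Fin m → Fin n, ∀ i, bundleVal (V i) X i ≥ WMMS hn s (V i) i := by
  haveI : NeZero n := ⟨hn.ne'⟩
  classical
  set W : Fin m → ℝ := fun j => if ∀ i, V i j = -1 then -1 else 0 with hW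
  obtain ⟨X1, -, hX1⟩ := Finset.exists_mem_eq_sup'
    (Finset.univ_nonempty (α := Fin m → Fin n))
    (fun X => (Finset.univ : Finset (Fin n)).inf' Finset.univ_nonempty
      (fun k => bundleVal W X k / s k))
  have hzero : ∀ j : Fin m, ¬(∀ i, V i j = -1) → ∃ i, V i j = 0 := by
    intro j hj
    push_neg at hj
    obtain ⟨i, hi⟩ := hj
    exact ⟨i, (hbin i j).resolve_right hi⟩
  set X : Fin m → Fin n := fun j =>
    if h : ∀ i, V i j = -1 then X1 j else (hzero j h).choose with hX
  have hVW : ∀ i j, V i j ≤ W j := by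
    intro i j
    simp only [hW]
    by_cases h : ∀ i, V i j = -1
    · simp [h, (h i).le]
    · simp only [h, if_false]
      rcases hbin i j with h' | h' <;> rw [h'] <;> norm_num
  have hc : ∀ (i : Fin n) (Y : Fin m → Fin n) (k : Fin n), bundleVal (V i) Y k ≤ bundleVal W Y k := by
    intro i Y k
    exact Finset.sum_le_sum fun j _ => hVW i j
  -- bundleVal W X = bundleVal W X1
  have ha : ∀ k, bundleVal W X k = bundleVal W X1 k := by
    intro k
    unfold bundleVal
    rw [Finset.sum_filter, Finset.sum_filter]
    apply Finset.sum_congr rfl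
    intro j _
    by_cases h : ∀ i, V i j = -1
    · have : X j = X1 j := by simp [hX, h]
      rw [this]
    · have hWj : W j = 0 := by simp [hW, h]
      simp [hWj]
  have hb : ∀ i, bundleVal (V i) X i = bundleVal W X i := by
    intro i
    apply Finset.sum_congr rfl
    intro j hj
    simp only [Finset.mem_filter] at hj
    by_cases h : ∀ i, V i j = -1
    · simp [hW, h, h i]
    · have hXj : X j = (hzero j h).choose := by simp [hX, h]
      have : (hzero j h).choose = i := by rw [← hXj]; exact hj.2
      have hv : V i j = 0 := by rw [← this]; exact (hzero j h).choose_spec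
      simp [hW, h, hv]
  refine ⟨X, fun i => ?_⟩
  have hsup : (Finset.univ : Finset (Fin m → Fin n)).sup' Finset.univ_nonempty
      (fun Y => (Finset.univ : Finset (Fin n)).inf' Finset.univ_nonempty
        (fun k => bundleVal (V i) Y k / s k))
      ≤ (Finset.univ : Finset (Fin n)).inf' Finset.univ_nonempty
        (fun k => bundleVal W X1 k / s k) := by
    apply Finset.sup'_le
    intro Y _
    have h1 : (Finset.univ : Finset (Fin n)).inf' Finset.univ_nonempty
        (fun k => bundleVal (V i) Y k / s k)
        ≤ (Finset.univ : Finset (Fin n)).inf' Finset.univ_nonempty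
        (fun k => bundleVal W Y k / s k) := by
      apply Finset.le_inf'
      intro k _
      refine le_trans (Finset.inf'_le _ (Finset.mem_univ k)) ?_
      exact div_le_div_of_nonneg_right (hc i Y k) (hs_pos k).le |>.trans_eq rfl
    refine h1.trans ?_
    rw [← hX1]
    exact Finset.le_sup' (fun Z => (Finset.univ : Finset (Fin n)).inf' Finset.univ_nonempty
      (fun k => bundleVal W Z k / s k)) (Finset.mem_univ Y)
  have key : WMMS hn s (V i) i ≤ bundleVal W X1 i := by
    unfold WMMS
    calc s i * _ ≤ s i * ((Finset.univ : Finset (Fin n)).inf' Finset.univ_nonempty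
          (fun k => bundleVal W X1 k / s k)) := by
          exact mul_le_mul_of_nonneg_left hsup (hs_pos i).le
      _ ≤ s i * (bundleVal W X1 i / s i) := by
          apply mul_le_mul_of_nonneg_left _ (hs_pos i).le
          exact Finset.inf'_le _ (Finset.mem_univ i)
      _ = bundleVal W X1 i := by
          rw [mul_comm]; exact div_mul_cancel₀ _ (hs_pos i).ne'
  calc WMMS hn s (V i) i ≤ bundleVal W X1 i := key
    _ = bundleVal W X i := (ha i).symm
    _ = bundleVal (V i) X i := (hb i).symm
end

section
/- In the 3-agent instance with shares (ε, ε, 1−2ε) and identical valuations (−ε+ε², −ε², −ε, −1+2ε) for chores 1–4 (0 < ε < 1/4 sufficiently small), the allocation X_1 = {1,2}, X_2 = {3}, X_3 = {4} is a WMMS allocation: WMMS_1 = WMMS_2 = −ε and WMMS_3 = −1+2ε, and V_i(X_i) ≥ WMMS_i for each i. -/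
open Finset

lemma bundle_sum {n m : ℕ} (V : Fin m → ℝ) (Y : Fin m → Fin n) :
    ∑ k, bundleVal V Y k = ∑ j, V j := by
  simpa [bundleVal] using Finset.sum_fiberwise (Finset.univ : Finset (Fin m)) Y V

/-- The 3-agent instance with shares `(ε, ε, 1-2ε)` and identical valuation
`(-ε+ε², -ε², -ε, -1+2ε)`: `WMMS` values are `(-ε, -ε, -(1-2ε))`, and the allocation
`X₁ = {1,2}, X₂ = {3}, X₃ = {2}` is an exact WMMS allocation. -/
theorem stmt_16 (ε : ℝ) (hε : 0 < ε) (hε' : ε < 1/4) :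
    let s : Fin 3 → ℝ := ![ε, ε, 1 - 2*ε]
    let V : Fin 4 → ℝ := ![-ε + ε^2, -ε^2, -ε, -1 + 2*ε]
    let X : Fin 4 → Fin 3 := ![0, 0, 1, 2]
    WMMS (by norm_num) s V 0 = -ε ∧
    WMMS (by norm_num) s V 1 = -ε ∧
    WMMS (by norm_num) s V 2 = -(1 - 2*ε) ∧
    ∀ i : Fin 3, bundleVal V X i ≥ WMMS (by norm_num) s V i := by
  intro s V X
  have h2 : (0:ℝ) < 1 - 2*ε := by linarith
  have hspos : ∀ k : Fin 3, 0 < s k := by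
    intro k; fin_cases k <;> simp [s] <;> linarith
  have hsum : ∑ j, V j = -1 := by
    simp [V, Fin.sum_univ_four]; ring
  have hX : ∀ k : Fin 3, bundleVal V X k = s k * (-1) := by
    intro k
    fin_cases k <;>
      simp [bundleVal, s, V, X, Finset.sum_filter, Fin.sum_univ_four] <;> ring
  have key : (Finset.univ : Finset (Fin 4 → Fin 3)).sup' Finset.univ_nonempty
      (fun Y => (Finset.univ : Finset (Fin 3)).inf' Finset.univ_nonempty
        (fun k => bundleVal V Y k / s k)) = -1 := by
    apply le_antisymm
    · apply Finset.sup'_le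
      intro Y _
      by_contra h
      push_neg at h
      have hall : ∀ k : Fin 3, -(s k) < bundleVal V Y k := by
        intro k
        have h1 : (-1:ℝ) < bundleVal V Y k / s k :=
          lt_of_lt_of_le h (Finset.inf'_le _ (Finset.mem_univ k))
        have := (lt_div_iff₀ (hspos k)).mp h1
        linarith
      have hlt : ∑ k : Fin 3, -(s k) < ∑ k : Fin 3, bundleVal V Y k :=
        Finset.sum_lt_sum_of_nonempty Finset.univ_nonempty (fun k _ => hall k)
      rw [bundle_sum, hsum] at hlt
      have : ∑ k : Fin 3, -(s k) = -1 := by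
        simp [s, Fin.sum_univ_three]; ring
      linarith
    · apply Finset.le_sup'_of_le _ (Finset.mem_univ X)
      apply Finset.le_inf'
      intro k _
      rw [hX k, mul_comm, mul_div_assoc, div_self (hspos k).ne', mul_one]
  have hW : ∀ i : Fin 3, WMMS (by norm_num) s V i = s i * (-1) := by
    intro i; rw [WMMS, key]
  refine ⟨?_, ?_, ?_, ?_⟩
  · rw [hW 0]; simp [s]
  · rw [hW 1]; simp [s]
  · rw [hW 2]; simp [s]
  · intro i; rw [hW i, hX i]
end

section
/- For the family of instances with n agents, shares s_i = n/(n+1)^{n−i+1}, n² chores where each of the chores (k−1)n+1,...,kn has common value −1/(n+1)^{n−k+1} to all agents: the partition giving agent i the chores {(i−1)n+1,...,in} satisfies V(X_i)/s_i = −1 for every i, hence WMMS_i = −s_i = −n/(n+1)^{n−i+1} for each agent i (taking the normalization where totals are as given). -/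
open Finset

/-- The family of instances with shares `s i = n/(n+1)^(n-i)` and `n²` chores in `n` tiers,
tier `t` chores each worth `-1/(n+1)^(n-t)`: the tiered partition (agent `i` receives tier `i`)
has every weighted ratio equal to `-1`, and `WMMS_i = -s i` for every agent. -/
theorem stmt_17 (n : ℕ) (hn : 0 < n) :
    let s : Fin n → ℝ := fun i => (n : ℝ) / ((n:ℝ)+1)^(n - i.val)
    let V : Fin (n*n) → ℝ := fun j => -(1 / ((n:ℝ)+1)^(n - j.val / n))
    let X : Fin (n*n) → Fin n :=
      fun j => ⟨j.val / n, (Nat.div_lt_iff_lt_mul hn).mpr j.isLt⟩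
    (∀ i, bundleVal V X i / s i = -1) ∧ (∀ i, WMMS hn s V i = -s i) := by
  intro s V X
  haveI : NeZero n := ⟨hn.ne'⟩
  have hn1 : (0:ℝ) < (n:ℝ) + 1 := by positivity
  have hspos : ∀ i : Fin n, 0 < s i := by
    intro i
    have : (0:ℝ) < (n:ℝ) := by exact_mod_cast hn
    simp only [s]
    positivity
  -- cardinality of each fiber is n
  have hcard : ∀ i : Fin n, (Finset.univ.filter (fun j : Fin (n*n) => X j = i)).card = n := by
    intro i
    have key : (Finset.univ.filter (fun j : Fin (n*n) => X j = i)).card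
        = (Finset.univ : Finset (Fin n)).card := by
      refine Finset.card_bij' (fun j _ => (⟨j.val % n, Nat.mod_lt _ hn⟩ : Fin n))
        (fun b _ => (⟨i.val * n + b.val, ?_⟩ : Fin (n*n))) (fun _ _ => Finset.mem_univ _)
        ?_ ?_ ?_
      · calc i.val * n + b.val < i.val * n + n := by omega
          _ = (i.val + 1) * n := by ring
          _ ≤ n * n := Nat.mul_le_mul_right n i.isLt
      · intro b _
        simp only [Finset.mem_filter, Finset.mem_univ, true_and, X]
        have hdiv : (i.val * n + b.val) / n = i.val := by
          rw [mul_comm, Nat.mul_add_div hn, Nat.div_eq_of_lt b.isLt, Nat.add_zero]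
        exact Fin.ext hdiv
      · intro j hj
        simp only [Finset.mem_filter, Finset.mem_univ, true_and, X] at hj
        have hdiv : j.val / n = i.val := congrArg Fin.val hj
        have hmod := Nat.div_add_mod j.val n
        apply Fin.ext
        simp only
        have h2 : n * (j.val / n) = n * i.val := by rw [hdiv]
        have h3 : i.val * n = n * i.val := Nat.mul_comm _ _
        omega
      · intro b _
        apply Fin.ext
        simp only
        rw [add_comm, Nat.add_mul_mod_self_right, Nat.mod_eq_of_lt b.isLt]
    simpa using key
  -- each bundle value equals -(s i)
  have hbund : ∀ i : Fin n, bundleVal V X i = -(s i) := by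
    intro i
    unfold bundleVal
    have hconst : ∀ j ∈ Finset.univ.filter (fun j : Fin (n*n) => X j = i),
        V j = -(1 / ((n:ℝ)+1)^(n - i.val)) := by
      intro j hj
      simp only [Finset.mem_filter, Finset.mem_univ, true_and, X] at hj
      have hdiv : j.val / n = i.val := congrArg Fin.val hj
      simp only [V, hdiv]
    rw [Finset.sum_congr rfl hconst, Finset.sum_const, hcard i, nsmul_eq_mul]
    simp only [s]
    field_simp
  have hratio : ∀ i : Fin n, bundleVal V X i / s i = -1 := by
    intro i
    rw [hbund i, neg_div, div_self (hspos i).ne']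
  refine ⟨hratio, ?_⟩
  -- total value
  have hVsum : ∑ j, V j = -(∑ k, s k) := by
    rw [← Finset.sum_fiberwise Finset.univ X V, ← Finset.sum_neg_distrib]
    exact Finset.sum_congr rfl (fun k _ => hbund k)
  have hssum : (0:ℝ) < ∑ k, s k :=
    Finset.sum_pos (fun k _ => hspos k) Finset.univ_nonempty
  -- upper bound for every partition
  have hub : ∀ X' : Fin (n*n) → Fin n,
      (Finset.univ : Finset (Fin n)).inf' Finset.univ_nonempty
        (fun k => bundleVal V X' k / s k) ≤ -1 := by
    intro X'
    set c := (Finset.univ : Finset (Fin n)).inf' Finset.univ_nonempty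
        (fun k => bundleVal V X' k / s k) with hc
    have hkey : ∀ k : Fin n, c * s k ≤ bundleVal V X' k := by
      intro k
      have := Finset.inf'_le (fun k => bundleVal V X' k / s k) (Finset.mem_univ k)
      exact (le_div_iff₀ (hspos k)).mp this
    have hsum : c * (∑ k, s k) ≤ ∑ k, bundleVal V X' k := by
      rw [Finset.mul_sum]
      exact Finset.sum_le_sum (fun k _ => hkey k)
    have hpart : ∑ k, bundleVal V X' k = ∑ j, V j := by
      unfold bundleVal
      exact Finset.sum_fiberwise Finset.univ X' V
    rw [hpart, hVsum] at hsum
    nlinarith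
  -- the supremum equals -1
  have hsup : (Finset.univ : Finset (Fin (n*n) → Fin n)).sup' Finset.univ_nonempty
      (fun X' => (Finset.univ : Finset (Fin n)).inf' Finset.univ_nonempty
        (fun k => bundleVal V X' k / s k)) = -1 := by
    apply le_antisymm
    · exact Finset.sup'_le _ _ (fun X' _ => hub X')
    · have hX : (Finset.univ : Finset (Fin n)).inf' Finset.univ_nonempty
          (fun k => bundleVal V X k / s k) = -1 := by
        have : (fun k => bundleVal V X k / s k) = fun _ => (-1 : ℝ) := funext hratio
        rw [this, Finset.inf'_const]
      have hle := Finset.le_sup'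
        (fun X' : Fin (n*n) → Fin n => (Finset.univ : Finset (Fin n)).inf'
          Finset.univ_nonempty (fun k => bundleVal V X' k / s k)) (Finset.mem_univ X)
      rw [hX] at hle
      exact hle
  intro i
  unfold WMMS
  rw [hsup, mul_neg_one]
end

section
/- Round-robin selection can be unboundedly bad for WMMS with asymmetric shares: in the family of instances above (shares s_i = n/(n+1)^{n−i+1}, n² chores in n value-tiers), under round-robin each agent receives one chore from each tier, so agent 1 gets value −1/n · (normalizing constant), while WMMS_1 = −n/(n+1)^n; the ratio V_1(X_1)/WMMS_1 = (1/n)/(n/(n+1)^n) = (n+1)^n/n² tends to infinity as n → ∞. -/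
open Finset

lemma key (C : ℝ) (n : ℕ) (hn3 : 3 ≤ n) (hCn : |C| ≤ (n:ℝ)) (hn : 0 < n) :
    let s : Fin n → ℝ := fun i => (n : ℝ) / ((n:ℝ)+1)^(n - i.val)
    let V : Fin (n*n) → ℝ := fun j => -(1 / ((n:ℝ)+1)^(n - j.val / n))
    let X : Fin (n*n) → Fin n := fun j => ⟨j.val % n, Nat.mod_lt _ hn⟩
    bundleVal V X ⟨0, hn⟩ < C * WMMS hn s V ⟨0, hn⟩ := by
  intro s V X
  haveI : NeZero n := ⟨hn.ne'⟩
  have hN1 : (0:ℝ) < (n:ℝ) + 1 := by positivity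
  have hspos : ∀ k : Fin n, 0 < s k := fun k => by
    simp only [s]; positivity
  have hVnp : ∀ j : Fin (n*n), V j ≤ 0 := fun j => by
    simp only [V]; have : (0:ℝ) ≤ 1 / ((n:ℝ)+1)^(n - j.val / n) := by positivity
    linarith
  -- bundles are nonpositive
  have hbnp : ∀ (X' : Fin (n*n) → Fin n) (k : Fin n), bundleVal V X' k ≤ 0 := by
    intro X' k
    exact Finset.sum_nonpos (fun j _ => hVnp j)
  -- the good partition
  have hYlt : ∀ j : Fin (n*n), j.val / n < n := fun j =>
    (Nat.div_lt_iff_lt_mul hn).mpr j.isLt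
  set Y : Fin (n*n) → Fin n := fun j => ⟨j.val / n, hYlt j⟩ with hY
  have hYval : ∀ k : Fin n, -(s k) ≤ bundleVal V Y k := by
    intro k
    set c : ℝ := -(1 / ((n:ℝ)+1)^(n - k.val)) with hc
    have hceq : ∀ j ∈ Finset.univ.filter (fun j => Y j = k), V j = c := by
      intro j hj
      simp only [Finset.mem_filter] at hj
      have : j.val / n = k.val := congrArg Fin.val hj.2
      simp only [V, hc, this]
    have hsum : bundleVal V Y k =
        (Finset.univ.filter (fun j => Y j = k)).card • c := by
      rw [bundleVal, Finset.sum_congr rfl hceq, Finset.sum_const]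
    have hcard : (Finset.univ.filter (fun j : Fin (n*n) => Y j = k)).card ≤ n := by
      have := Finset.card_le_card_of_injOn (fun j : Fin (n*n) => j.val % n)
        (s := Finset.univ.filter (fun j : Fin (n*n) => Y j = k))
        (t := Finset.range n)
        (fun j _ => Finset.mem_range.mpr (Nat.mod_lt _ hn))
        (by
          intro a ha b hb hab
          simp only [Finset.coe_filter, Set.mem_setOf_eq, Finset.mem_filter] at ha hb
          have h1 : a.val / n = k.val := congrArg Fin.val ha.2
          have h2 : b.val / n = k.val := congrArg Fin.val hb.2
          have h3 : a.val % n = b.val % n := hab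
          have h12 : a.val / n = b.val / n := h1.trans h2.symm
          have : a.val = b.val := by
            rw [← Nat.div_add_mod a.val n, ← Nat.div_add_mod b.val n, h12, h3]
          exact Fin.ext this)
      simpa using this
    have hcle : (0:ℝ) ≥ c := by
      have : (0:ℝ) ≤ 1 / ((n:ℝ)+1)^(n - k.val) := by positivity
      simp only [hc]; linarith
    rw [hsum]
    have : ((Finset.univ.filter (fun j : Fin (n*n) => Y j = k)).card : ℝ) * c ≥ (n:ℝ) * c := by
      apply mul_le_mul_of_nonpos_right _ hcle
      exact_mod_cast hcard
    have hsk : -(s k) = (n:ℝ) * c := by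
      simp only [s, hc]
      field_simp
    rw [nsmul_eq_mul]
    linarith
  -- bounds on M
  set M : ℝ := (Finset.univ : Finset (Fin (n*n) → Fin n)).sup' Finset.univ_nonempty
    (fun X' => (Finset.univ : Finset (Fin n)).inf' Finset.univ_nonempty
      (fun k => bundleVal V X' k / s k)) with hM
  have hM0 : M ≤ 0 := by
    apply Finset.sup'_le
    intro X' _
    refine le_trans (Finset.inf'_le _ (Finset.mem_univ ⟨0, hn⟩)) ?_
    exact div_nonpos_iff.mpr (Or.inr ⟨hbnp X' ⟨0,hn⟩, (hspos ⟨0,hn⟩).le⟩)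
  have hM1 : -1 ≤ M := by
    refine le_trans ?_ (Finset.le_sup' _ (Finset.mem_univ Y))
    apply Finset.le_inf'
    intro k _
    rw [le_div_iff₀ (hspos k)]
    have := hYval k
    linarith
  have hWMMS : WMMS hn s V ⟨0, hn⟩ = s ⟨0, hn⟩ * M := rfl
  -- value of round robin bundle for agent 0
  have hj0lt : (n-1)*n < n*n := (Nat.mul_lt_mul_right hn).mpr (Nat.sub_lt hn one_pos)
  set j0 : Fin (n*n) := ⟨(n-1)*n, hj0lt⟩ with hj0
  have hj0mem : j0 ∈ Finset.univ.filter (fun j => X j = (⟨0, hn⟩ : Fin n)) := by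
    simp only [Finset.mem_filter, Finset.mem_univ, true_and, X]
    apply Fin.ext
    simp [hj0, Nat.mul_mod_left]
  have hVj0 : V j0 = -(1 / ((n:ℝ)+1)) := by
    simp only [V, hj0]
    have h1 : (n-1)*n/n = n-1 := Nat.mul_div_cancel _ hn
    have h2 : n - (n-1) = 1 := by omega
    rw [h1, h2, pow_one]
  have hbund : bundleVal V X ⟨0, hn⟩ ≤ -(1 / ((n:ℝ)+1)) := by
    rw [bundleVal, ← Finset.add_sum_erase _ V hj0mem, hVj0]
    have : ∑ j ∈ (Finset.univ.filter (fun j => X j = (⟨0, hn⟩:Fin n))).erase j0, V j ≤ 0 :=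
      Finset.sum_nonpos (fun j _ => hVnp j)
    linarith
  -- arithmetic
  have hs0 : s ⟨0, hn⟩ = (n:ℝ) / ((n:ℝ)+1)^n := by simp [s]
  have hNge : (3:ℝ) ≤ (n:ℝ) := by exact_mod_cast hn3
  have harith : |C| * ((n:ℝ) / ((n:ℝ)+1)^n) < 1 / ((n:ℝ)+1) := by
    rw [mul_div_assoc', div_lt_div_iff₀ (by positivity) hN1]
    set N := (n:ℝ) with hNdef
    have hA : (1:ℝ) ≤ (N+1)^(n-3) := one_le_pow₀ (by linarith)
    have hpow : (N+1)^n = (N+1)^(n-3) * (N+1)^3 := by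
      rw [← pow_add]; congr 1; omega
    have habs : (0:ℝ) ≤ |C| := abs_nonneg C
    have h1 : |C| * N * (N+1) ≤ N * N * (N+1) := by nlinarith
    have h2 : N * N * (N+1) < (N+1)^3 := by nlinarith
    have h3 : (N+1)^3 ≤ (N+1)^(n-3) * (N+1)^3 :=
      le_mul_of_one_le_left (by positivity) hA
    calc |C| * N * (N+1) < (N+1)^3 := by linarith
      _ ≤ (N+1)^(n-3) * (N+1)^3 := h3
      _ = 1 * (N+1)^n := by rw [hpow, one_mul]
  have hs0pos := hspos ⟨0,hn⟩
  have hMabs : |M| ≤ 1 := abs_le.mpr ⟨hM1, by linarith⟩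
  have h5 : |C * (s ⟨0,hn⟩ * M)| ≤ |C| * s ⟨0,hn⟩ := by
    rw [abs_mul, abs_mul, abs_of_pos hs0pos]
    calc |C| * (s ⟨0,hn⟩ * |M|) ≤ |C| * (s ⟨0,hn⟩ * 1) := by
          apply mul_le_mul_of_nonneg_left _ (abs_nonneg C)
          exact mul_le_mul_of_nonneg_left hMabs hs0pos.le
      _ = |C| * s ⟨0,hn⟩ := by ring
  have h6 : -(|C| * s ⟨0,hn⟩) ≤ C * (s ⟨0,hn⟩ * M) := by
    have := neg_abs_le (C * (s ⟨0,hn⟩ * M)); linarith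
  have h7 : |C| * s ⟨0,hn⟩ < 1/((n:ℝ)+1) := by rw [hs0]; exact harith
  rw [hWMMS]
  linarith


/-- Round-robin is unboundedly bad for WMMS with asymmetric shares: for every constant `C`
there is an `n` such that, in the tiered instance (shares `s i = n/(n+1)^(n-i)`, `n²` chores,
tier `t` worth `-1/(n+1)^(n-t)`), the round-robin allocation (chore `j` to agent `j mod n`,
so each agent gets one chore per tier) gives agent `0` value less than `C · WMMS_0`. -/
theorem stmt_18 :
    ∀ C : ℝ, ∃ n : ℕ, ∃ hn : 0 < n,
      let s : Fin n → ℝ := fun i => (n : ℝ) / ((n:ℝ)+1)^(n - i.val)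
      let V : Fin (n*n) → ℝ := fun j => -(1 / ((n:ℝ)+1)^(n - j.val / n))
      let X : Fin (n*n) → Fin n := fun j => ⟨j.val % n, Nat.mod_lt _ hn⟩
      bundleVal V X ⟨0, hn⟩ < C * WMMS hn s V ⟨0, hn⟩ := by
  intro C
  refine ⟨max 3 ⌈|C|⌉₊, lt_of_lt_of_le (by norm_num) (le_max_left _ _), ?_⟩
  exact key C _ (le_max_left _ _)
    ((Nat.le_ceil _).trans (Nat.cast_le.mpr (le_max_right _ _))) _
end

section
/- If a bipartite graph between agents and chores is a pseudoforest (each connected component is a tree or a tree plus one edge) and every chore vertex has degree at least 2, then the graph contains a matching that covers (saturates) all chore vertices. -/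
open Finset

open scoped Classical in
/-- Counting lemma: in a component `c` meeting a vertex set `W`, the number of edges of `c`
with all endpoints in `W`, plus the number of vertices of `c` outside `W`, is at most the
total number of edges of `c`. -/
lemma auxA {V : Type*} [Fintype V] [DecidableEq V] (G : SimpleGraph V) [DecidableRel G.Adj]
    (c : G.ConnectedComponent) (W : Finset V) (hW : ∃ w ∈ W, G.connectedComponentMk w = c) :
    (G.edgeFinset.filter (fun e => (∀ v ∈ e, G.connectedComponentMk v = c) ∧
        ∀ v ∈ e, v ∈ W)).card
      + (Finset.univ.filter (fun v => G.connectedComponentMk v = c ∧ v ∉ W)).card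
      ≤ (G.edgeFinset.filter (fun e => ∀ v ∈ e, G.connectedComponentMk v = c)).card := by
  classical
  set Wc : Finset V := W.filter (fun w => G.connectedComponentMk w = c) with hWc
  have hne : Wc.Nonempty := by
    obtain ⟨w, hw, hwc⟩ := hW
    exact ⟨w, by simp [hWc, hw, hwc]⟩
  set d : V → ℕ := fun v => Wc.inf' hne (fun w => G.dist v w) with hd
  -- for each vertex of `c` outside `W`, choose a neighbor strictly closer to `Wc`
  have key : ∀ v, G.connectedComponentMk v = c → v ∉ W →
      ∃ u, G.Adj v u ∧ d u < d v := by
    intro v hvc hvW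
    obtain ⟨w, hw, hdw⟩ := Finset.exists_mem_eq_inf' hne (fun w => G.dist v w)
    have hwW : w ∈ W := (Finset.mem_filter.mp hw).1
    have hwc : G.connectedComponentMk w = c := (Finset.mem_filter.mp hw).2
    have hreach : G.Reachable v w := SimpleGraph.ConnectedComponent.exact (hvc.trans hwc.symm)
    have hdpos : G.dist v w ≠ 0 := by
      intro h0
      rcases SimpleGraph.dist_eq_zero_iff_eq_or_not_reachable.mp h0 with h | h
      · exact hvW (h ▸ hwW)
      · exact h hreach
    obtain ⟨p, hp⟩ := hreach.exists_walk_length_eq_dist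
    cases p with
    | nil => exact absurd hwW hvW
    | cons hadj q =>
      rename_i u
      refine ⟨u, hadj, ?_⟩
      have h1 : d u ≤ G.dist u w := Finset.inf'_le _ hw
      have h2 : G.dist u w ≤ q.length := SimpleGraph.dist_le q
      have h3 : q.length + 1 = G.dist v w := by simpa using hp
      have h4 : d v = G.dist v w := hdw
      omega
  choose! nxt hadj hlt using key
  -- the injection from vertices of `c` outside `W` into edges of `c` not inside `W`
  have hsplit :
      (G.edgeFinset.filter (fun e => ∀ v ∈ e, G.connectedComponentMk v = c)).card =
      ((G.edgeFinset.filter (fun e => ∀ v ∈ e, G.connectedComponentMk v = c)).filter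
          (fun e => ∀ v ∈ e, v ∈ W)).card
      + ((G.edgeFinset.filter (fun e => ∀ v ∈ e, G.connectedComponentMk v = c)).filter
          (fun e => ¬ ∀ v ∈ e, v ∈ W)).card :=
    (Finset.card_filter_add_card_filter_not _).symm
  have hEW :
      (G.edgeFinset.filter (fun e => (∀ v ∈ e, G.connectedComponentMk v = c) ∧
          ∀ v ∈ e, v ∈ W)) =
      ((G.edgeFinset.filter (fun e => ∀ v ∈ e, G.connectedComponentMk v = c)).filter
          (fun e => ∀ v ∈ e, v ∈ W)) := by
    rw [Finset.filter_filter]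
  rw [hEW, hsplit]
  have hinj : (Finset.univ.filter (fun v => G.connectedComponentMk v = c ∧ v ∉ W)).card ≤
      ((G.edgeFinset.filter (fun e => ∀ v ∈ e, G.connectedComponentMk v = c)).filter
          (fun e => ¬ ∀ v ∈ e, v ∈ W)).card := by
    apply Finset.card_le_card_of_injOn (fun v => s(v, nxt v))
    · intro v hv
      rw [Finset.mem_coe, Finset.mem_filter] at hv
      obtain ⟨-, hvc, hvW⟩ := hv
      have ha : G.Adj v (nxt v) := hadj v hvc hvW
      rw [Finset.mem_coe, Finset.mem_filter, Finset.mem_filter]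
      refine ⟨⟨SimpleGraph.mem_edgeFinset.mpr ha, ?_⟩, ?_⟩
      · intro x hx
        rw [Sym2.mem_iff] at hx
        rcases hx with rfl | rfl
        · exact hvc
        · exact (SimpleGraph.ConnectedComponent.connectedComponentMk_eq_of_adj ha.symm).trans hvc
      · intro hall
        exact hvW (hall v (Sym2.mem_mk_left _ _))
    · intro v1 h1 v2 h2 heq
      rw [Finset.coe_filter, Set.mem_setOf_eq] at h1 h2
      obtain ⟨-, h1c, h1W⟩ := h1
      obtain ⟨-, h2c, h2W⟩ := h2
      rw [Sym2.eq_iff] at heq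
      rcases heq with ⟨h, -⟩ | ⟨ha, hb⟩
      · exact h
      · exfalso
        have l1 : d (nxt v1) < d v1 := hlt v1 h1c h1W
        have l2 : d (nxt v2) < d v2 := hlt v2 h2c h2W
        rw [hb] at l1
        rw [← ha] at l2
        omega
  omega

open scoped Classical in
/-- Density: the number of edges with all endpoints in `W` is at most `W.card`,
for a pseudoforest. -/
lemma auxB {V : Type*} [Fintype V] [DecidableEq V] (G : SimpleGraph V) [DecidableRel G.Adj]
    (hpseudo : ∀ c : G.ConnectedComponent,
      {e ∈ G.edgeSet | ∀ v ∈ e, G.connectedComponentMk v = c}.ncard ≤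
        {v : V | G.connectedComponentMk v = c}.ncard)
    (W : Finset V) :
    (G.edgeFinset.filter (fun e => ∀ v ∈ e, v ∈ W)).card ≤ W.card := by
  classical
  -- translate hpseudo to Finset cards
  have hpseudo' : ∀ c : G.ConnectedComponent,
      (G.edgeFinset.filter (fun e => ∀ v ∈ e, G.connectedComponentMk v = c)).card ≤
      (Finset.univ.filter (fun v => G.connectedComponentMk v = c)).card := by
    intro c
    have h1 : {e ∈ G.edgeSet | ∀ v ∈ e, G.connectedComponentMk v = c} =
        ↑(G.edgeFinset.filter (fun e => ∀ v ∈ e, G.connectedComponentMk v = c)) := by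
      ext e; simp [Set.mem_setOf_eq]
    have h2 : {v : V | G.connectedComponentMk v = c} =
        ↑(Finset.univ.filter (fun v => G.connectedComponentMk v = c)) := by
      ext v; simp
    have := hpseudo c
    rwa [h1, h2, Set.ncard_coe_finset, Set.ncard_coe_finset] at this
  -- group the edges and vertices of W by connected component
  set C : Finset G.ConnectedComponent := W.image (fun v => G.connectedComponentMk v) with hC
  have hWdecomp : W = C.biUnion (fun c => W.filter (fun v => G.connectedComponentMk v = c)) := by
    ext v
    simp only [Finset.mem_biUnion, Finset.mem_filter, hC, Finset.mem_image]
    constructor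
    · intro hv; exact ⟨G.connectedComponentMk v, ⟨v, hv, rfl⟩, hv, rfl⟩
    · rintro ⟨c, -, hv, -⟩; exact hv
  have hEdecomp : G.edgeFinset.filter (fun e => ∀ v ∈ e, v ∈ W) =
      C.biUnion (fun c => G.edgeFinset.filter (fun e =>
        (∀ v ∈ e, G.connectedComponentMk v = c) ∧ ∀ v ∈ e, v ∈ W)) := by
    ext e
    induction e with
    | _ x y =>
      simp only [Finset.mem_biUnion, Finset.mem_filter]
      constructor
      · rintro ⟨he, hW'⟩
        have hadj : G.Adj x y := SimpleGraph.mem_edgeFinset.mp he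
        refine ⟨G.connectedComponentMk x, ?_, he, ?_, hW'⟩
        · rw [hC, Finset.mem_image]
          exact ⟨x, hW' x (Sym2.mem_mk_left _ _), rfl⟩
        · intro v hv
          rw [Sym2.mem_iff] at hv
          rcases hv with rfl | rfl
          · rfl
          · exact (SimpleGraph.ConnectedComponent.connectedComponentMk_eq_of_adj hadj.symm)
      · rintro ⟨c, -, he, -, hW'⟩; exact ⟨he, hW'⟩
  rw [hEdecomp]
  conv_rhs => rw [hWdecomp]
  rw [Finset.card_biUnion, Finset.card_biUnion]
  · apply Finset.sum_le_sum
    intro c hc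
    rw [hC, Finset.mem_image] at hc
    obtain ⟨w, hwW, hwc⟩ := hc
    have hA := auxA G c W ⟨w, hwW, hwc⟩
    have hsplit : (Finset.univ.filter (fun v => G.connectedComponentMk v = c)).card =
        (W.filter (fun v => G.connectedComponentMk v = c)).card +
        (Finset.univ.filter (fun v => G.connectedComponentMk v = c ∧ v ∉ W)).card := by
      rw [← Finset.card_filter_add_card_filter_not
        (s := Finset.univ.filter (fun v => G.connectedComponentMk v = c)) (p := fun v => v ∈ W)]
      congr 1
      · congr 1
        ext v
        simp only [Finset.mem_filter, Finset.mem_univ, true_and]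
        tauto
      · congr 1
        ext v
        simp only [Finset.mem_filter, Finset.mem_univ, true_and]
    have := hpseudo' c
    omega
  · -- vertices: disjointness
    intro c1 h1 c2 h2 hne
    simp only [Finset.disjoint_left, Finset.mem_filter]
    rintro v ⟨-, rfl⟩ ⟨-, h⟩
    exact hne h
  · -- edges: disjointness
    intro c1 h1 c2 h2 hne
    simp only [Finset.disjoint_left, Finset.mem_filter]
    rintro e ⟨he, hc1, -⟩ ⟨-, hc2, -⟩
    induction e with
    | _ x y =>
      exact hne ((hc1 x (Sym2.mem_mk_left _ _)).symm.trans (hc2 x (Sym2.mem_mk_left _ _)))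

/-- If a bipartite graph between agents `α` and chores `β` is a pseudoforest (each connected
component has at most as many edges as vertices) and every chore vertex has degree at least
`2`, then there is a matching saturating all chore vertices. -/
theorem stmt_19 {α β : Type*} [Fintype α] [Fintype β] [DecidableEq α] [DecidableEq β]
    (G : SimpleGraph (α ⊕ β)) [DecidableRel G.Adj]
    (hbipL : ∀ a a' : α, ¬ G.Adj (Sum.inl a) (Sum.inl a'))
    (hbipR : ∀ b b' : β, ¬ G.Adj (Sum.inr b) (Sum.inr b'))
    (hpseudo : ∀ c : G.ConnectedComponent,
      {e ∈ G.edgeSet | ∀ v ∈ e, G.connectedComponentMk v = c}.ncard ≤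
        {v : α ⊕ β | G.connectedComponentMk v = c}.ncard)
    (hdeg : ∀ b : β, 2 ≤ G.degree (Sum.inr b)) :
    ∃ f : β → α, Function.Injective f ∧ ∀ b, G.Adj (Sum.inl (f b)) (Sum.inr b) := by
  classical
  set t : β → Finset α := fun b => Finset.univ.filter (fun a => G.Adj (Sum.inl a) (Sum.inr b))
    with ht
  have hall : ∀ s : Finset β, s.card ≤ (s.biUnion t).card := by
    intro s
    set W : Finset (α ⊕ β) := (s.biUnion t).image Sum.inl ∪ s.image Sum.inr with hW
    -- degree of each chore equals the card of t b
    have hdegt : ∀ b : β, (t b).card = G.degree (Sum.inr b) := by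
      intro b
      rw [← SimpleGraph.card_neighborFinset_eq_degree]
      have : G.neighborFinset (Sum.inr b) = (t b).image Sum.inl := by
        ext v
        cases v with
        | inl a => simp [ht, SimpleGraph.adj_comm]
        | inr b' => simp [hbipR b b', ht]
      rw [this, Finset.card_image_of_injective _ Sum.inl_injective]
    -- lower bound : 2 * s.card ≤ number of edges inside W
    have hlow : 2 * s.card ≤ (G.edgeFinset.filter (fun e => ∀ v ∈ e, v ∈ W)).card := by
      have hsub : s.biUnion (fun b => (t b).image (fun a => s(Sum.inl a, Sum.inr b))) ⊆
          G.edgeFinset.filter (fun e => ∀ v ∈ e, v ∈ W) := by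
        intro e he
        rw [Finset.mem_biUnion] at he
        obtain ⟨b, hb, he⟩ := he
        rw [Finset.mem_image] at he
        obtain ⟨a, ha, rfl⟩ := he
        have hadj : G.Adj (Sum.inl a) (Sum.inr b) := by
          rw [ht] at ha; simpa using ha
        rw [Finset.mem_filter]
        refine ⟨SimpleGraph.mem_edgeFinset.mpr hadj, ?_⟩
        intro v hv
        rw [Sym2.mem_iff] at hv
        rcases hv with rfl | rfl
        · rw [hW, Finset.mem_union, Finset.mem_image]
          exact Or.inl ⟨a, Finset.mem_biUnion.mpr ⟨b, hb, ha⟩, rfl⟩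
        · rw [hW, Finset.mem_union, Finset.mem_image, Finset.mem_image]
          exact Or.inr ⟨b, hb, rfl⟩
      have hcard : (s.biUnion (fun b => (t b).image (fun a => s(Sum.inl a, Sum.inr b)))).card =
          ∑ b ∈ s, (t b).card := by
        rw [Finset.card_biUnion]
        · apply Finset.sum_congr rfl
          intro b hb
          apply Finset.card_image_of_injective
          intro a1 a2 h12
          rw [Sym2.eq_iff] at h12
          rcases h12 with ⟨h, -⟩ | ⟨h, -⟩
          · exact Sum.inl_injective h
          · exact absurd h (by simp)
        · intro b1 h1 b2 h2 hne
          simp only [Finset.disjoint_left, Finset.mem_image]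
          rintro e ⟨a1, -, rfl⟩ ⟨a2, -, he⟩
          rw [Sym2.eq_iff] at he
          rcases he with ⟨-, h⟩ | ⟨h, -⟩
          · exact hne (Sum.inr_injective h.symm)
          · exact absurd h (by simp)
      calc 2 * s.card = ∑ b ∈ s, 2 := by
            rw [Finset.sum_const, smul_eq_mul, mul_comm]
        _ ≤ ∑ b ∈ s, (t b).card := by
            apply Finset.sum_le_sum
            intro b hb
            rw [hdegt b]
            exact hdeg b
        _ = (s.biUnion (fun b => (t b).image (fun a => s(Sum.inl a, Sum.inr b)))).card :=
            hcard.symm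
        _ ≤ _ := Finset.card_le_card hsub
    have hup := auxB G hpseudo W

    have hWcard : W.card = (s.biUnion t).card + s.card := by
      rw [hW, Finset.card_union_of_disjoint, Finset.card_image_of_injective _ Sum.inl_injective,
        Finset.card_image_of_injective _ Sum.inr_injective]
      simp only [Finset.disjoint_left, Finset.mem_image]
      rintro v ⟨a, -, rfl⟩ ⟨b, -, h⟩
      exact Sum.inl_ne_inr h.symm
    omega
  obtain ⟨f, hinj, hf⟩ := (Finset.all_card_le_biUnion_card_iff_exists_injective t).mp hall
  refine ⟨f, hinj, fun b => ?_⟩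
  have := hf b
  rw [ht] at this
  simpa using this
end
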